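/- Let α ∈ (1/2, 1), let λ ∈ ℂ with Re(λ) > 0, and let s be real with 0 < s < α. Define g(u) = ∫₀^∞ e^{-(λ - u^α cos(πα)) v} sin(u^α v sin(πα)) dv for u > 0 (the inner integral converges since Re(λ) > 0 > u^α cos(πα) for α ∈ (1/2,1)). Then the Mellin transform ∫₀^∞ u^{s-1} g(u) du converges and equals π λ^{s/α - 1} sin(π(1-α)s/α) / (α sin(sπ/α)). -/

import Mathlib

set_option maxHeartbeats 1000000

open Real Set Filter MeasureTheory Complex

lemma integrableOn_cexp_neg_mul {z : ℂ} (hz : 0 < z.re) :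
    IntegrableOn (fun v : ℝ => Complex.exp (-(z * v))) (Ioi 0) := by
  apply Integrable.mono' ((exp_neg_integrableOn_Ioi 0 hz).ofReal (f := fun v => Real.exp (-z.re * v)))
  · exact (Complex.continuous_exp.comp (by fun_prop)).aestronglyMeasurable
  · filter_upwards with v
    rw [Complex.norm_exp]
    simp [neg_mul]

lemma integral_cexp_neg_mul {z : ℂ} (hz : 0 < z.re) :
    ∫ v in Ioi (0 : ℝ), Complex.exp (-(z * v)) = z⁻¹ := by
  have hz0 : z ≠ 0 := fun h => by simp [h] at hz
  have hd : ∀ x ∈ Ici (0:ℝ), HasDerivAt (fun v : ℝ => -z⁻¹ * Complex.exp (-(z * v)))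
      (Complex.exp (-(z * x))) x := by
    intro x _
    have : HasDerivAt (fun v : ℝ => -(z * v)) (-z) x := by
      simpa using ((hasDerivAt_id x).ofReal_comp.const_mul (-z))
    have := (Complex.hasDerivAt_exp _).comp x this
    have h3 := this.const_mul (-z⁻¹)
    rw [show -z⁻¹ * (Complex.exp (-(z * x)) * -z) = Complex.exp (-(z * x)) by
      rw [mul_neg, neg_mul_neg, mul_comm (Complex.exp _) z, ← mul_assoc, inv_mul_cancel₀ hz0,
        one_mul]] at h3
    exact h3
  have ht : Tendsto (fun v : ℝ => -z⁻¹ * Complex.exp (-(z * v))) atTop (nhds 0) := by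
    rw [show (0:ℂ) = -z⁻¹ * 0 by ring]
    apply Tendsto.const_mul
    rw [tendsto_zero_iff_norm_tendsto_zero]
    have : (fun v : ℝ => ‖Complex.exp (-(z * v))‖) = fun v : ℝ => Real.exp (-z.re * v) := by
      ext v; rw [Complex.norm_exp]; simp [neg_mul]
    rw [this]
    exact Real.tendsto_exp_atBot.comp (tendsto_id.const_mul_atTop_of_neg (neg_lt_zero.2 hz))
  have := integral_Ioi_of_hasDerivAt_of_tendsto' hd
      (integrableOn_cexp_neg_mul hz) ht
  rw [this]; simp

lemma integrableOn_cpow_mul_cexp {a : ℂ} (ha : 0 < a.re) {z : ℂ} (hz : 0 < z.re) :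
    IntegrableOn (fun t : ℝ => (t:ℂ) ^ (a - 1) * Complex.exp (-(z * t))) (Ioi 0) := by
  have hbase : IntegrableOn (fun t : ℝ => t ^ (a.re - 1) * Real.exp (-z.re * t)) (Ioi 0) := by
    have := integrableOn_rpow_mul_exp_neg_mul_rpow (p := 1) (s := a.re - 1) (b := z.re)
      (by linarith) one_pos hz
    refine this.congr_fun (fun x hx => ?_) measurableSet_Ioi
    simp only [Real.rpow_one]
  apply Integrable.mono' hbase
  · apply ContinuousOn.aestronglyMeasurable ?_ measurableSet_Ioi
    intro t ht
    exact (((continuousAt_ofReal_cpow_const t (a-1) (Or.inr (ne_of_gt ht))).mul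
      (Complex.continuous_exp.continuousAt.comp (by fun_prop))).continuousWithinAt)
  · filter_upwards [ae_restrict_mem measurableSet_Ioi] with t ht
    rw [norm_mul, Complex.norm_exp,
      Complex.norm_cpow_eq_rpow_re_of_pos ht]
    simp only [Complex.sub_re, Complex.one_re, Complex.neg_re, Complex.mul_re,
      Complex.ofReal_re, Complex.ofReal_im, mul_zero, sub_zero]
    rw [neg_mul]

lemma integral_cpow_mul_cexp {a : ℂ} (ha : 0 < a.re) {c : ℂ} (hc : 0 < c.re) :
    ∫ t in Ioi (0:ℝ), (t:ℂ) ^ (a - 1) * Complex.exp (-(c * t)) = Complex.Gamma a * c ^ (-a) := by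
  set U : Set ℂ := {z : ℂ | 0 < z.re} with hU
  have hUopen : IsOpen U := isOpen_lt continuous_const Complex.continuous_re
  set F : ℂ → ℂ := fun z => ∫ t in Ioi (0:ℝ), (t:ℂ) ^ (a - 1) * Complex.exp (-(z * t)) with hF
  set G : ℂ → ℂ := fun z => Complex.Gamma a * z ^ (-a) with hG
  have hmeas : ∀ z : ℂ, AEStronglyMeasurable (fun t : ℝ => (t:ℂ) ^ (a - 1) * Complex.exp (-(z * t)))
      (volume.restrict (Ioi 0)) := by
    intro z
    apply ContinuousOn.aestronglyMeasurable ?_ measurableSet_Ioi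
    intro t ht
    exact (((continuousAt_ofReal_cpow_const t (a-1) (Or.inr (ne_of_gt ht))).mul
      (Complex.continuous_exp.continuousAt.comp (by fun_prop))).continuousWithinAt)
  have hmeas' : ∀ z : ℂ, AEStronglyMeasurable
      (fun t : ℝ => -(t:ℂ) * ((t:ℂ) ^ (a - 1) * Complex.exp (-(z * t))))
      (volume.restrict (Ioi 0)) := by
    intro z
    exact (Complex.continuous_ofReal.neg.aestronglyMeasurable).mul (hmeas z)
  have hFdiff : DifferentiableOn ℂ F U := by
    intro z₀ hz₀
    have hz₀re : 0 < z₀.re := hz₀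
    set ε : ℝ := z₀.re / 2 with hε
    have hεpos : 0 < ε := by positivity
    have hbd : IntegrableOn (fun t : ℝ => t ^ a.re * Real.exp (-ε * t)) (Ioi 0) := by
      have := integrableOn_rpow_mul_exp_neg_mul_rpow (p := 1) (s := a.re) (b := ε)
        (by linarith) one_pos hεpos
      exact this.congr_fun (fun x hx => by simp only [Real.rpow_one]) measurableSet_Ioi
    have key := hasDerivAt_integral_of_dominated_loc_of_deriv_le (F := fun z (t : ℝ) =>
        (t:ℂ) ^ (a - 1) * Complex.exp (-(z * t)))
        (F' := fun z (t : ℝ) => -(t:ℂ) * ((t:ℂ) ^ (a - 1) * Complex.exp (-(z * t))))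
        (x₀ := z₀) (bound := fun t => t ^ a.re * Real.exp (-ε * t)) (Metric.ball_mem_nhds z₀ hεpos)
        (.of_forall fun z => hmeas z)
        (integrableOn_cpow_mul_cexp ha hz₀re) (hmeas' z₀) ?_ hbd ?_
    · exact (key.2.differentiableAt.differentiableWithinAt)
    · filter_upwards [ae_restrict_mem measurableSet_Ioi] with t ht z hz
      have hzre : ε ≤ z.re := by
        have habs : ‖z - z₀‖ < ε := by rwa [Metric.mem_ball, Complex.dist_eq] at hz
        have h2 : |z.re - z₀.re| < ε := lt_of_le_of_lt (by simpa using Complex.abs_re_le_norm (z - z₀)) habs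
        have := abs_lt.1 h2
        simp only [hε] at *; linarith
      rw [norm_mul, norm_mul, norm_neg, Complex.norm_exp, Complex.norm_cpow_eq_rpow_re_of_pos ht,
        Complex.norm_real, Real.norm_eq_abs, abs_of_pos ht]
      have h1 : (↑t * z).re = z.re * t := by
        simp [Complex.mul_re]; ring
      have : t * t ^ (a - 1).re = t ^ a.re := by
        nth_rewrite 1 [← Real.rpow_one t]
        rw [← Real.rpow_add ht]
        norm_num
      rw [← mul_assoc, this]
      gcongr
      · exact Real.rpow_nonneg ht.le _
      simp only [Complex.neg_re, Complex.mul_re, Complex.ofReal_re, Complex.ofReal_im,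
        zero_mul, sub_zero, mul_zero]
      have ht' : (0:ℝ) < t := ht
      nlinarith [mul_le_mul_of_nonneg_right hzre ht'.le]
    · filter_upwards [ae_restrict_mem measurableSet_Ioi] with t ht z hz
      have : HasDerivAt (fun z : ℂ => -(z * t)) (-(t:ℂ)) z := by
        have h := ((hasDerivAt_id z).mul_const (t:ℂ)).neg
        simp only [one_mul] at h
        exact h
      have := (Complex.hasDerivAt_exp _).comp z this
      have h3 := this.const_mul ((t:ℂ) ^ (a - 1))
      rw [show (t:ℂ) ^ (a - 1) * (Complex.exp (-(z * t)) * -(t:ℂ))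
        = -(t:ℂ) * ((t:ℂ) ^ (a - 1) * Complex.exp (-(z * t))) by ring] at h3
      exact h3
  have hGdiff : DifferentiableOn ℂ G U := by
    intro z hz
    apply DifferentiableAt.differentiableWithinAt
    exact (differentiableAt_const _).mul (((hasDerivAt_id z).cpow_const (Or.inl hz)).differentiableAt)
  have hreal : ∀ r : ℝ, 0 < r → F r = G r := by
    intro r hr
    have := Complex.integral_cpow_mul_exp_neg_mul_Ioi ha hr
    rw [hF, hG]
    simp only []
    rw [this, one_div, Complex.inv_cpow _ _ (by
      rw [Complex.arg_ofReal_of_nonneg hr.le]; exact pi_ne_zero.symm), ← Complex.cpow_neg,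
      mul_comm]
  have hFa : AnalyticOnNhd ℂ F U := hFdiff.analyticOnNhd hUopen
  have hGa : AnalyticOnNhd ℂ G U := hGdiff.analyticOnNhd hUopen
  have hfreq : ∃ᶠ z in nhdsWithin (1:ℂ) {(1:ℂ)}ᶜ, F z = G z := by
    have htend : Tendsto (fun n : ℕ => ((1 + (n+1:ℝ)⁻¹ : ℝ) : ℂ)) atTop
        (nhdsWithin (1:ℂ) {(1:ℂ)}ᶜ) := by
      apply tendsto_nhdsWithin_of_tendsto_nhds_of_eventually_within
      · have h0 : Tendsto (fun n : ℕ => ((n:ℝ)+1)⁻¹) atTop (nhds 0) := by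
          simpa only [one_div] using (tendsto_one_div_add_atTop_nhds_zero_nat :
            Tendsto (fun n : ℕ => 1 / ((n:ℝ) + 1)) atTop (nhds 0))
        have h1 : Tendsto (fun n : ℕ => (1 + ((n:ℝ)+1)⁻¹)) atTop (nhds 1) := by
          have := (tendsto_const_nhds (x := (1:ℝ))).add h0
          rwa [add_zero] at this
        have h2 := (Complex.continuous_ofReal.tendsto 1).comp h1
        simpa [Function.comp_def] using h2
      · filter_upwards with n
        simp only [mem_compl_iff, mem_singleton_iff]
        intro h
        have : (1 + (n+1:ℝ)⁻¹ : ℝ) = 1 := by exact_mod_cast h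
        have hpos : (0:ℝ) < (n+1:ℝ)⁻¹ := by positivity
        linarith
    exact htend.frequently (Frequently.of_forall fun n => hreal _ (by positivity))
  have := hFa.eqOn_of_preconnected_of_frequently_eq hGa
    ((convex_halfSpace_re_gt 0).isPreconnected) (by simp [hU, U] : (1:ℂ) ∈ U) hfreq
  exact this hc

lemma cpow_polar {w : ℝ} (hw : 0 < w) {φ : ℝ} (hφ : φ ∈ Ioc (-π) π) (q : ℂ) :
    ((w:ℂ) * Complex.exp (φ * Complex.I)) ^ q
      = (w:ℂ) ^ q * Complex.exp (q * φ * Complex.I) := by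
  have hene : Complex.exp ((φ:ℂ) * Complex.I) ≠ 0 := Complex.exp_ne_zero _
  have hbne : (w:ℂ) * Complex.exp ((φ:ℂ) * Complex.I) ≠ 0 :=
    mul_ne_zero (by exact_mod_cast hw.ne') hene
  have harg : Complex.arg ((w:ℂ) * Complex.exp ((φ:ℂ) * Complex.I)) = φ := by
    rw [Complex.arg_real_mul _ hw, Complex.exp_mul_I]
    exact Complex.arg_cos_add_sin_mul_I hφ
  have habs : ‖(w:ℂ) * Complex.exp ((φ:ℂ) * Complex.I)‖ = w := by
    rw [norm_mul, Complex.norm_exp, Complex.norm_real, Real.norm_eq_abs, abs_of_pos hw]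
    simp
  have hlog : Complex.log ((w:ℂ) * Complex.exp ((φ:ℂ) * Complex.I))
      = Real.log w + φ * Complex.I := by
    apply Complex.ext <;> simp [Complex.log_re, Complex.log_im, habs, harg]
  rw [Complex.cpow_def_of_ne_zero hbne, hlog,
    Complex.cpow_def_of_ne_zero (by exact_mod_cast hw.ne' : (w:ℂ) ≠ 0),
    ← Complex.ofReal_log hw.le, ← Complex.exp_add]
  congr 1
  ring

lemma mellinB {p : ℝ} (hp0 : 0 < p) (hp1 : p < 1) {θ : ℝ} (hθ1 : π/2 < θ) (hθ2 : θ < π)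
    {lam : ℂ} (hlam : 0 < lam.re) :
    IntegrableOn (fun t : ℝ => (t:ℂ) ^ ((p:ℂ)-1) * (lam - t * Complex.exp (θ * Complex.I))⁻¹)
      (Ioi 0) ∧
    ∫ t in Ioi (0:ℝ), (t:ℂ) ^ ((p:ℂ)-1) * (lam - t * Complex.exp (θ * Complex.I))⁻¹
      = Complex.Gamma p * Complex.Gamma (1-(p:ℂ)) * Complex.exp (-(p:ℂ) * (θ-π) * Complex.I)
        * lam ^ ((p:ℂ)-1) := by
  have hcos : Real.cos θ < 0 := Real.cos_neg_of_pi_div_two_lt_of_lt hθ1 (by linarith [Real.pi_pos])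
  set eθ : ℂ := Complex.exp (θ * Complex.I) with heθ
  have heθre : eθ.re = Real.cos θ := by
    rw [heθ, Complex.exp_ofReal_mul_I_re]
  have hzre : ∀ t : ℝ, 0 ≤ t → 0 < (lam - t * eθ).re := by
    intro t ht
    have : ((t:ℂ) * eθ).re = t * Real.cos θ := by
      rw [Complex.mul_re, heθre]
      simp
    rw [Complex.sub_re, this]
    nlinarith
  set H : ℝ × ℝ → ℂ := fun q =>
    (q.1:ℂ) ^ ((p:ℂ)-1) * Complex.exp (-((lam - q.1 * eθ) * q.2)) with hHdef
  set μ : Measure (ℝ × ℝ) := (volume.restrict (Ioi 0)).prod (volume.restrict (Ioi 0)) with hμ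
  -- measurability
  have hHmeas : AEStronglyMeasurable H μ := by
    rw [hμ, Measure.prod_restrict]
    apply ContinuousOn.aestronglyMeasurable ?_ (measurableSet_Ioi.prod measurableSet_Ioi)
    intro q hq
    have h1 : ContinuousAt (fun q : ℝ × ℝ => (q.1:ℂ) ^ ((p:ℂ)-1)) q :=
      (continuousAt_ofReal_cpow_const q.1 _ (Or.inr (ne_of_gt hq.1))).comp
        continuous_fst.continuousAt
    have h2 : ContinuousAt (fun q : ℝ × ℝ => Complex.exp (-((lam - q.1 * eθ) * q.2))) q := by
      apply Complex.continuous_exp.continuousAt.comp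
      fun_prop
    exact (h1.mul h2).continuousWithinAt
  -- slice integrability
  have hslice : ∀ t : ℝ, t ∈ Ioi (0:ℝ) →
      Integrable (fun w : ℝ => H (t, w)) (volume.restrict (Ioi 0)) := by
    intro t ht
    exact (integrableOn_cexp_neg_mul (hzre t (le_of_lt ht))).const_mul ((t:ℂ) ^ ((p:ℂ)-1))
  -- norm of H
  have hHnorm : ∀ t w : ℝ, 0 < t →
      ‖H (t, w)‖ = t ^ (p-1) * Real.exp (-(lam.re - t * Real.cos θ) * w) := by
    intro t w ht
    have h1 : ((t:ℂ) * eθ).re = t * Real.cos θ := by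
      rw [Complex.mul_re, heθre]; simp
    have h2 : (-((lam - (t:ℂ) * eθ) * (w:ℂ))).re = -(lam.re - t * Real.cos θ) * w := by
      rw [Complex.neg_re, Complex.mul_re]
      simp only [Complex.ofReal_im, mul_zero, sub_zero, Complex.ofReal_re, Complex.sub_re, h1]
      ring
    rw [hHdef]
    simp only [norm_mul, Complex.norm_exp,
      Complex.norm_cpow_eq_rpow_re_of_pos ht, h2]
    norm_num
  -- integrable marginal bound
  have hmarg : IntegrableOn (fun t : ℝ => t ^ (p-1) * (lam.re - t * Real.cos θ)⁻¹) (Ioi 0) := by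
    have h1 : IntegrableOn (fun t : ℝ => t ^ (p-1) * (lam.re - t * Real.cos θ)⁻¹) (Ioc 0 1) := by
      have hb : IntegrableOn (fun t : ℝ => t ^ (p-1) * lam.re⁻¹) (Ioc 0 1) := by
        have hb0 : IntegrableOn (fun t : ℝ => t ^ (p-1)) (Ioc (0:ℝ) 1) := by
          rw [← intervalIntegrable_iff_integrableOn_Ioc_of_le zero_le_one]
          exact intervalIntegral.intervalIntegrable_rpow' (by linarith)
        exact hb0.mul_const _
      apply Integrable.mono' hb
      · apply ContinuousOn.aestronglyMeasurable ?_ measurableSet_Ioc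
        intro t ht
        have h2 : (0:ℝ) < lam.re - t * Real.cos θ := by nlinarith [ht.1]
        exact (((Real.continuousAt_rpow_const t _ (Or.inl (ne_of_gt ht.1))).mul
          ((continuousAt_const.sub ((continuousAt_id).mul continuousAt_const)).inv₀
            (ne_of_gt h2)))).continuousWithinAt
      · filter_upwards [ae_restrict_mem measurableSet_Ioc] with t ht
        have h2 : (0:ℝ) < lam.re - t * Real.cos θ := by nlinarith [ht.1]
        rw [norm_mul, Real.norm_eq_abs, abs_of_pos (Real.rpow_pos_of_pos ht.1 _),
          Real.norm_eq_abs, abs_of_pos (inv_pos.2 h2)]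
        gcongr
        · exact Real.rpow_nonneg (le_of_lt ht.1) _
        · nlinarith [ht.1]
    have h2 : IntegrableOn (fun t : ℝ => t ^ (p-1) * (lam.re - t * Real.cos θ)⁻¹) (Ioi 1) := by
      have hb : IntegrableOn (fun t : ℝ => t ^ (p-2) * (-Real.cos θ)⁻¹) (Ioi 1) :=
        (integrableOn_Ioi_rpow_of_lt (by linarith) one_pos).mul_const _
      apply Integrable.mono' hb
      · apply ContinuousOn.aestronglyMeasurable ?_ measurableSet_Ioi
        intro t ht
        have ht0 : (0:ℝ) < t := lt_trans one_pos ht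
        have h2 : (0:ℝ) < lam.re - t * Real.cos θ := by nlinarith
        exact (((Real.continuousAt_rpow_const t _ (Or.inl (ne_of_gt ht0))).mul
          ((continuousAt_const.sub ((continuousAt_id).mul continuousAt_const)).inv₀
            (ne_of_gt h2)))).continuousWithinAt
      · filter_upwards [ae_restrict_mem measurableSet_Ioi] with t ht
        have ht0 : (0:ℝ) < t := lt_trans one_pos ht
        have h2 : (0:ℝ) < lam.re - t * Real.cos θ := by nlinarith
        rw [norm_mul, Real.norm_eq_abs, abs_of_pos (Real.rpow_pos_of_pos ht0 _),
          Real.norm_eq_abs, abs_of_pos (inv_pos.2 h2)]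
        have e1 : t ^ (p-1) = t ^ (p-2) * t := by
          rw [← Real.rpow_add_one (ne_of_gt ht0) (p-2)]
          congr 1
          ring
        rw [e1, mul_assoc]
        apply mul_le_mul_of_nonneg_left ?_ (Real.rpow_nonneg ht0.le _)
        rw [← div_eq_mul_inv, div_le_iff₀ h2]
        have hinv : (0:ℝ) ≤ (-Real.cos θ)⁻¹ := le_of_lt (inv_pos.2 (by linarith))
        calc t = (-Real.cos θ)⁻¹ * (t * (-Real.cos θ)) := by
              rw [mul_comm ((-Real.cos θ)⁻¹), mul_assoc,
                mul_inv_cancel₀ (by linarith : -Real.cos θ ≠ 0), mul_one]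
          _ ≤ (-Real.cos θ)⁻¹ * (lam.re - t * Real.cos θ) := by
              apply mul_le_mul_of_nonneg_left ?_ hinv
              nlinarith
    have h3 := h1.union h2
    rwa [Ioc_union_Ioi_eq_Ioi zero_le_one] at h3
  -- real exponential integral
  have hrealexp : ∀ b : ℝ, 0 < b → ∫ w in Ioi (0:ℝ), Real.exp (-(b*w)) = b⁻¹ := by
    intro b hb
    have hd : ∀ x ∈ Ici (0:ℝ), HasDerivAt (fun w : ℝ => -b⁻¹ * Real.exp (-(b*w)))
        (Real.exp (-(b*x))) x := by
      intro x _
      have h1 : HasDerivAt (fun w : ℝ => -(b*w)) (-b) x := by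
        have h := ((hasDerivAt_id x).const_mul b).neg
        simp only [mul_one] at h
        exact h
      have h2 := (Real.hasDerivAt_exp _).comp x h1
      have h3 := h2.const_mul (-b⁻¹)
      rw [show -b⁻¹ * (Real.exp (-(b * x)) * -b) = Real.exp (-(b * x)) by
        rw [mul_neg, neg_mul_neg, mul_comm (Real.exp _) b, ← mul_assoc, inv_mul_cancel₀ hb.ne',
          one_mul]] at h3
      exact h3
    have hint : IntegrableOn (fun w : ℝ => Real.exp (-(b*w))) (Ioi 0) := by
      simpa [neg_mul] using exp_neg_integrableOn_Ioi 0 hb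
    have ht : Tendsto (fun w : ℝ => -b⁻¹ * Real.exp (-(b*w))) atTop (nhds 0) := by
      rw [show (0:ℝ) = -b⁻¹ * 0 by ring]
      apply Tendsto.const_mul
      apply Real.tendsto_exp_atBot.comp
      have := tendsto_neg_atTop_atBot.comp ((tendsto_id (α := ℝ)).const_mul_atTop hb)
      simpa [neg_mul, Function.comp_def] using this
    have hfin := integral_Ioi_of_hasDerivAt_of_tendsto' hd hint ht
    rw [hfin]
    simp
  have hbre : ∀ t : ℝ, 0 ≤ t → 0 < lam.re - t * Real.cos θ := by
    intro t ht; nlinarith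
  -- product integrability
  have hHint : Integrable H μ := by
    rw [hμ] at hHmeas ⊢
    rw [MeasureTheory.integrable_prod_iff hHmeas]
    constructor
    · filter_upwards [ae_restrict_mem measurableSet_Ioi] with t ht
      exact hslice t ht
    · apply Integrable.congr hmarg
      filter_upwards [ae_restrict_mem measurableSet_Ioi] with t ht
      have ht0 : (0:ℝ) < t := ht
      have e : ∫ w in Ioi (0:ℝ), ‖H (t, w)‖
          = t ^ (p-1) * (lam.re - t * Real.cos θ)⁻¹ := by
        have e2' : ∫ w in Ioi (0:ℝ), Real.exp (-(lam.re - t * Real.cos θ) * w)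
            = (lam.re - t * Real.cos θ)⁻¹ := by
          rw [← hrealexp _ (hbre t ht0.le)]
          apply setIntegral_congr_fun measurableSet_Ioi
          intro w _
          simp only [neg_mul]
        rw [setIntegral_congr_fun measurableSet_Ioi
          (fun w (_ : w ∈ Ioi (0:ℝ)) => hHnorm t w ht0),
          MeasureTheory.integral_const_mul, e2']
      exact e.symm
  -- pointwise inner integral in w
  have hpoint : ∀ t : ℝ, 0 < t → (∫ w in Ioi (0:ℝ), H (t, w))
      = (t:ℂ) ^ ((p:ℂ)-1) * (lam - t * eθ)⁻¹ := by
    intro t ht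
    rw [hHdef]
    simp only []
    rw [MeasureTheory.integral_const_mul]
    congr 1
    exact integral_cexp_neg_mul (hzre t ht.le)
  -- part 1: integrability
  have hint1 : IntegrableOn
      (fun t : ℝ => (t:ℂ) ^ ((p:ℂ)-1) * (lam - t * eθ)⁻¹) (Ioi 0) := by
    have h := hHint.integral_prod_left
    apply Integrable.congr h
    filter_upwards [ae_restrict_mem measurableSet_Ioi] with t ht
    exact hpoint t ht
  refine ⟨hint1, ?_⟩
  -- compute: swap order
  have e1 : ∫ t in Ioi (0:ℝ), (t:ℂ) ^ ((p:ℂ)-1) * (lam - t * eθ)⁻¹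
      = ∫ t in Ioi (0:ℝ), ∫ w in Ioi (0:ℝ), H (t, w) :=
    (setIntegral_congr_fun measurableSet_Ioi
      (fun t (ht : t ∈ Ioi (0:ℝ)) => (hpoint t ht).symm))
  have e2 : ∫ t in Ioi (0:ℝ), ∫ w in Ioi (0:ℝ), H (t, w)
      = ∫ w in Ioi (0:ℝ), ∫ t in Ioi (0:ℝ), H (t, w) :=
    MeasureTheory.integral_integral_swap (by exact hHint)
  -- inner integral in t for fixed w
  have e3 : ∀ w : ℝ, 0 < w → (∫ t in Ioi (0:ℝ), H (t, w))
      = (Complex.Gamma p * Complex.exp (-(p:ℂ) * ((θ:ℂ)-π) * Complex.I))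
        * ((w:ℂ) ^ ((1-(p:ℂ))-1) * Complex.exp (-(lam * w))) := by
    intro w hw
    have hc : (0:ℝ) < (-(eθ * w)).re := by
      rw [Complex.neg_re, Complex.mul_re, heθre]
      simp only [Complex.ofReal_re, Complex.ofReal_im, mul_zero, sub_zero]
      nlinarith
    have step1 : (∫ t in Ioi (0:ℝ), H (t, w))
        = Complex.exp (-(lam * w)) *
          ∫ t in Ioi (0:ℝ), (t:ℂ) ^ ((p:ℂ)-1) * Complex.exp (-(-(eθ * w) * t)) := by
      rw [← MeasureTheory.integral_const_mul]
      apply setIntegral_congr_fun measurableSet_Ioi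
      intro t _
      rw [hHdef]
      simp only []
      rw [show -((lam - (t:ℂ) * eθ) * (w:ℂ)) = -(lam * (w:ℂ)) + -(-(eθ * (w:ℂ)) * (t:ℂ)) by ring,
        Complex.exp_add]
      ring
    rw [step1, integral_cpow_mul_cexp (by simpa using hp0) hc]
    have hpolar : (-(eθ * (w:ℂ))) ^ (-(p:ℂ))
        = (w:ℂ) ^ (-(p:ℂ)) * Complex.exp (-(p:ℂ) * ((θ:ℂ)-π) * Complex.I) := by
      have hbase : -(eθ * (w:ℂ)) = (w:ℂ) * Complex.exp (((θ - π : ℝ):ℂ) * Complex.I) := by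
        have : Complex.exp (((θ - π : ℝ):ℂ) * Complex.I) = -eθ := by
          rw [heθ]
          rw [show (((θ - π : ℝ):ℂ)) * Complex.I = (θ:ℂ) * Complex.I + -((π:ℂ) * Complex.I) by
            push_cast; ring]
          rw [Complex.exp_add, Complex.exp_neg, Complex.exp_pi_mul_I]
          norm_num
        rw [this]
        ring
      rw [hbase, cpow_polar hw ⟨by linarith, by linarith⟩]
      congr 2
      push_cast
      ring
    rw [hpolar]
    rw [show (1-(p:ℂ))-1 = -(p:ℂ) by ring]
    ring
  have e4 : ∫ w in Ioi (0:ℝ), ∫ t in Ioi (0:ℝ), H (t, w)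
      = (Complex.Gamma p * Complex.exp (-(p:ℂ) * ((θ:ℂ)-π) * Complex.I))
        * (Complex.Gamma (1-(p:ℂ)) * lam ^ (-(1-(p:ℂ)))) := by
    rw [setIntegral_congr_fun measurableSet_Ioi
      (fun w (hw : w ∈ Ioi (0:ℝ)) => e3 w hw)]
    rw [MeasureTheory.integral_const_mul]
    congr 1
    have heq : ∫ w in Ioi (0:ℝ), (w:ℂ) ^ ((1-(p:ℂ))-1) * Complex.exp (-(lam * w))
        = Complex.Gamma (1-(p:ℂ)) * lam ^ (-(1-(p:ℂ))) :=
      integral_cpow_mul_cexp (by simp [hp1]) hlam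
    exact heq
  rw [e1, e2, e4]
  rw [show -(1-(p:ℂ)) = (p:ℂ)-1 by ring, show -(p:ℂ) * ((θ:ℂ)-π) * Complex.I
    = -(p:ℂ) * ((θ:ℂ)-↑π) * Complex.I from rfl]
  ring

lemma conj_cpow_real {t : ℝ} (ht : 0 < t) (p : ℝ) :
    (starRingEnd ℂ) ((t:ℂ) ^ ((p:ℂ)-1)) = (t:ℂ) ^ ((p:ℂ)-1) := by
  have h : ((p:ℂ)-1) = (((p-1 : ℝ)):ℂ) := by push_cast; ring
  rw [h, ← Complex.ofReal_cpow ht.le, Complex.conj_ofReal]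

lemma conj_exp_theta (θ : ℝ) :
    (starRingEnd ℂ) (Complex.exp ((θ:ℂ) * Complex.I)) = Complex.exp (-(θ:ℂ) * Complex.I) := by
  rw [← Complex.exp_conj]
  congr 1
  rw [map_mul, Complex.conj_ofReal, Complex.conj_I]
  ring

lemma mellinBneg {p : ℝ} (hp0 : 0 < p) (hp1 : p < 1) {θ : ℝ} (hθ1 : π/2 < θ) (hθ2 : θ < π)
    {lam : ℂ} (hlam : 0 < lam.re) :
    IntegrableOn (fun t : ℝ => (t:ℂ) ^ ((p:ℂ)-1) * (lam - t * Complex.exp (-(θ:ℂ) * Complex.I))⁻¹)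
      (Ioi 0) ∧
    ∫ t in Ioi (0:ℝ), (t:ℂ) ^ ((p:ℂ)-1) * (lam - t * Complex.exp (-(θ:ℂ) * Complex.I))⁻¹
      = Complex.Gamma p * Complex.Gamma (1-(p:ℂ)) * Complex.exp ((p:ℂ) * ((θ:ℂ)-π) * Complex.I)
        * lam ^ ((p:ℂ)-1) := by
  have hlam' : 0 < ((starRingEnd ℂ) lam).re := by simpa using hlam
  obtain ⟨hI, hV⟩ := mellinB hp0 hp1 hθ1 hθ2 hlam'
  have hpteq : ∀ t : ℝ, t ∈ Ioi (0:ℝ) →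
      (starRingEnd ℂ) ((t:ℂ) ^ ((p:ℂ)-1) * ((starRingEnd ℂ) lam - t * Complex.exp ((θ:ℂ) * Complex.I))⁻¹)
      = (t:ℂ) ^ ((p:ℂ)-1) * (lam - t * Complex.exp (-(θ:ℂ) * Complex.I))⁻¹ := by
    intro t ht
    rw [map_mul, conj_cpow_real ht p, map_inv₀, map_sub, map_mul, Complex.conj_conj,
      Complex.conj_ofReal, conj_exp_theta]
  constructor
  · have hIc : IntegrableOn (fun t : ℝ => (starRingEnd ℂ)
        ((t:ℂ) ^ ((p:ℂ)-1) * ((starRingEnd ℂ) lam - t * Complex.exp ((θ:ℂ) * Complex.I))⁻¹)) (Ioi 0) := by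
      apply Integrable.mono hI
      · exact Complex.continuous_conj.comp_aestronglyMeasurable hI.aestronglyMeasurable
      · filter_upwards with t
        exact le_of_eq (by rw [Complex.norm_conj])
    exact hIc.congr_fun hpteq measurableSet_Ioi
  · have h1 : ∫ t in Ioi (0:ℝ), (t:ℂ) ^ ((p:ℂ)-1) * (lam - t * Complex.exp (-(θ:ℂ) * Complex.I))⁻¹
        = ∫ t in Ioi (0:ℝ), (starRingEnd ℂ)
          ((t:ℂ) ^ ((p:ℂ)-1) * ((starRingEnd ℂ) lam - t * Complex.exp ((θ:ℂ) * Complex.I))⁻¹) :=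
      (setIntegral_congr_fun measurableSet_Ioi hpteq).symm
    rw [h1, integral_conj, hV]
    have harg : lam.arg ≠ π := by
      intro h
      have := Complex.arg_eq_pi_iff.1 h
      linarith [this.1]
    rw [map_mul, map_mul, map_mul]
    congr 1
    · congr 1
      · congr 1
        · rw [← Complex.Gamma_conj]
          congr 1
          simp
        · rw [← Complex.Gamma_conj]
          congr 1
          simp
      · rw [← Complex.exp_conj]
        congr 1
        simp only [map_mul, map_sub, map_neg, Complex.conj_ofReal, Complex.conj_I]
        ring
    · have h2 := Complex.conj_cpow lam ((p:ℂ)-1) harg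
      rw [h2, Complex.conj_conj]
      congr 1
      simp

theorem stmt_18 (α : ℝ) (hα : α ∈ Set.Ioo (1 / 2 : ℝ) 1)
    (lam : ℂ) (hlam : 0 < lam.re) (s : ℝ) (hs : 0 < s) (hsα : s < α) :
    MeasureTheory.IntegrableOn (fun u : ℝ =>
        ((u ^ (s - 1) : ℝ) : ℂ) *
          ∫ v in Set.Ioi (0 : ℝ),
            Complex.exp (-(lam - ((u ^ α * Real.cos (π * α) : ℝ) : ℂ)) * (v : ℂ)) *
              ((Real.sin (u ^ α * v * Real.sin (π * α)) : ℝ) : ℂ))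
      (Set.Ioi 0) ∧
    (∫ u in Set.Ioi (0 : ℝ),
        ((u ^ (s - 1) : ℝ) : ℂ) *
          ∫ v in Set.Ioi (0 : ℝ),
            Complex.exp (-(lam - ((u ^ α * Real.cos (π * α) : ℝ) : ℂ)) * (v : ℂ)) *
              ((Real.sin (u ^ α * v * Real.sin (π * α)) : ℝ) : ℂ)) =
      (π : ℂ) * lam ^ ((s / α - 1 : ℝ) : ℂ) * ((Real.sin (π * (1 - α) * s / α) : ℝ) : ℂ) /
        ((α : ℂ) * ((Real.sin (s * π / α) : ℝ) : ℂ)) := by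
  obtain ⟨hα1, hα2⟩ := hα
  have hπ := Real.pi_pos
  have hα0 : (0:ℝ) < α := by linarith
  set θ : ℝ := π * α with hθdef
  have hθ1 : π/2 < θ := by rw [hθdef]; nlinarith
  have hθ2 : θ < π := by rw [hθdef]; nlinarith
  set p : ℝ := s / α with hpdef
  have hp0 : 0 < p := div_pos hs hα0
  have hp1 : p < 1 := (div_lt_one hα0).2 hsα
  obtain ⟨hI1, hV1⟩ := mellinB hp0 hp1 hθ1 hθ2 hlam
  obtain ⟨hI2, hV2⟩ := mellinBneg hp0 hp1 hθ1 hθ2 hlam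
  set h : ℝ → ℂ := fun t => (Complex.I/2) *
    ((lam - t * Complex.exp (-(θ:ℂ) * Complex.I))⁻¹
      - (lam - t * Complex.exp ((θ:ℂ) * Complex.I))⁻¹) with hhdef
  have hcos : Real.cos θ < 0 := Real.cos_neg_of_pi_div_two_lt_of_lt hθ1 (by linarith)
  have hexp1 : Complex.exp ((θ:ℂ) * Complex.I)
      = ((Real.cos θ : ℝ):ℂ) + ((Real.sin θ : ℝ):ℂ) * Complex.I := by
    rw [Complex.exp_mul_I, Complex.ofReal_cos, Complex.ofReal_sin]
  have hexp2 : Complex.exp (-(θ:ℂ) * Complex.I)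
      = ((Real.cos θ : ℝ):ℂ) - ((Real.sin θ : ℝ):ℂ) * Complex.I := by
    rw [Complex.exp_mul_I, Complex.cos_neg, Complex.sin_neg, Complex.ofReal_cos,
      Complex.ofReal_sin]
    ring
  have hre1 : ∀ t : ℝ, 0 ≤ t → 0 < (lam - (t:ℂ) * Complex.exp ((θ:ℂ) * Complex.I)).re := by
    intro t ht
    rw [hexp1]
    simp only [Complex.sub_re, Complex.add_re, Complex.mul_re, Complex.ofReal_re,
      Complex.ofReal_im, Complex.mul_im, Complex.I_re, Complex.I_im]
    simp
    nlinarith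
  have hre2 : ∀ t : ℝ, 0 ≤ t → 0 < (lam - (t:ℂ) * Complex.exp (-(θ:ℂ) * Complex.I)).re := by
    intro t ht
    rw [hexp2]
    simp only [Complex.sub_re, Complex.add_re, Complex.mul_re, Complex.ofReal_re,
      Complex.ofReal_im, Complex.mul_im, Complex.I_re, Complex.I_im]
    simp
    nlinarith
  -- inner integral identity
  have hinner : ∀ u : ℝ, u ∈ Ioi (0:ℝ) →
      (∫ v in Set.Ioi (0 : ℝ),
        Complex.exp (-(lam - ((u ^ α * Real.cos θ : ℝ) : ℂ)) * (v : ℂ)) *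
          ((Real.sin (u ^ α * v * Real.sin θ) : ℝ) : ℂ)) = h (u ^ α) := by
    intro u hu
    have ht0 : (0:ℝ) < u ^ α := Real.rpow_pos_of_pos hu α
    set t : ℝ := u ^ α
    have hpt : ∀ v : ℝ,
        Complex.exp (-(lam - ((t * Real.cos θ : ℝ) : ℂ)) * (v : ℂ)) *
          ((Real.sin (t * v * Real.sin θ) : ℝ) : ℂ)
        = (Complex.I/2) *
          (Complex.exp (-((lam - (t:ℂ) * Complex.exp (-(θ:ℂ) * Complex.I)) * v))
            - Complex.exp (-((lam - (t:ℂ) * Complex.exp ((θ:ℂ) * Complex.I)) * v))) := by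
      intro v
      have e1 : -((lam - (t:ℂ) * Complex.exp (-(θ:ℂ) * Complex.I)) * v)
          = -(lam - ((t * Real.cos θ : ℝ) : ℂ)) * v
            + -(((t * v * Real.sin θ : ℝ):ℂ) * Complex.I) := by
        rw [hexp2]; push_cast; ring
      have e2 : -((lam - (t:ℂ) * Complex.exp ((θ:ℂ) * Complex.I)) * v)
          = -(lam - ((t * Real.cos θ : ℝ) : ℂ)) * v
            + (((t * v * Real.sin θ : ℝ):ℂ) * Complex.I) := by
        rw [hexp1]; push_cast; ring
      rw [e1, e2, Complex.exp_add, Complex.exp_add, Complex.ofReal_sin, Complex.sin]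
      ring
    rw [setIntegral_congr_fun measurableSet_Ioi (fun v _ => hpt v)]
    rw [MeasureTheory.integral_const_mul]
    rw [integral_sub (integrableOn_cexp_neg_mul (hre2 t ht0.le))
      (integrableOn_cexp_neg_mul (hre1 t ht0.le))]
    rw [integral_cexp_neg_mul (hre2 t ht0.le), integral_cexp_neg_mul (hre1 t ht0.le)]
  -- Mellin convergence of h at p
  have hIh : IntegrableOn (fun t : ℝ => (t:ℂ) ^ (((p:ℝ):ℂ) - 1) • h t) (Ioi 0) := by
    have hbase := (hI2.sub hI1).const_mul (Complex.I/2)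
    apply Integrable.congr hbase
    filter_upwards with t
    simp only [hhdef, Pi.sub_apply, smul_eq_mul]
    ring
  have hmc : MellinConvergent h ((p:ℝ):ℂ) := hIh
  have hcast : ((p:ℝ):ℂ) = (s:ℂ) / (α:ℂ) := by
    rw [hpdef]; push_cast; ring
  have hmc2 : MellinConvergent (fun u : ℝ => h (u ^ α)) ((s:ℝ):ℂ) := by
    rw [MellinConvergent.comp_rpow (ne_of_gt hα0)]
    rwa [hcast] at hmc
  -- outer integrand equality on Ioi 0
  have houter : ∀ u : ℝ, u ∈ Ioi (0:ℝ) →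
      ((u ^ (s - 1) : ℝ) : ℂ) *
        (∫ v in Set.Ioi (0 : ℝ),
          Complex.exp (-(lam - ((u ^ α * Real.cos θ : ℝ) : ℂ)) * (v : ℂ)) *
            ((Real.sin (u ^ α * v * Real.sin θ) : ℝ) : ℂ))
      = (u:ℂ) ^ (((s:ℝ):ℂ) - 1) • h (u ^ α) := by
    intro u hu
    rw [hinner u hu, smul_eq_mul]
    congr 1
    rw [show ((s:ℝ):ℂ) - 1 = (((s - 1 : ℝ)):ℂ) by push_cast; ring,
      ← Complex.ofReal_cpow (le_of_lt hu)]
  constructor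
  · exact (hmc2.congr_fun (fun u hu => (houter u hu).symm) measurableSet_Ioi)
  · rw [setIntegral_congr_fun measurableSet_Ioi houter]
    have hmel : (∫ u in Ioi (0:ℝ), (u:ℂ) ^ (((s:ℝ):ℂ) - 1) • h (u ^ α))
        = mellin (fun u : ℝ => h (u ^ α)) ((s:ℝ):ℂ) := rfl
    rw [hmel, mellin_comp_rpow, ← hcast]
    have hmelh : mellin h ((p:ℝ):ℂ) = (Complex.I/2) *
        ((∫ t in Ioi (0:ℝ), (t:ℂ) ^ ((p:ℂ)-1) * (lam - t * Complex.exp (-(θ:ℂ) * Complex.I))⁻¹)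
        - ∫ t in Ioi (0:ℝ), (t:ℂ) ^ ((p:ℂ)-1) * (lam - t * Complex.exp ((θ:ℂ) * Complex.I))⁻¹) := by
      rw [mellin]
      rw [show (fun t : ℝ => (t:ℂ) ^ (((p:ℝ):ℂ) - 1) • h t)
          = fun t : ℝ => (Complex.I/2) * ((t:ℂ) ^ ((p:ℂ)-1) * (lam - t * Complex.exp (-(θ:ℂ) * Complex.I))⁻¹
            - (t:ℂ) ^ ((p:ℂ)-1) * (lam - t * Complex.exp ((θ:ℂ) * Complex.I))⁻¹) from
        funext fun t => by rw [hhdef]; simp only [smul_eq_mul]; ring]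
      rw [MeasureTheory.integral_const_mul, integral_sub hI2 hI1]
    rw [hmelh, hV1, hV2]
    -- final algebraic computation
    have hsin1 : (Complex.I/2) * (Complex.exp ((p:ℂ) * ((θ:ℂ)-π) * Complex.I)
        - Complex.exp (-(p:ℂ) * ((θ:ℂ)-π) * Complex.I))
        = Complex.sin ((p:ℂ) * ((π:ℂ) - θ)) := by
      have e1 : -((p:ℂ) * ((π:ℂ)-θ)) * Complex.I = (p:ℂ) * ((θ:ℂ)-π) * Complex.I := by ring
      have e2 : ((p:ℂ) * ((π:ℂ)-θ)) * Complex.I = -(p:ℂ) * ((θ:ℂ)-π) * Complex.I := by ring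
      rw [Complex.sin, e1, e2]
      ring
    have hrefl := Complex.Gamma_mul_Gamma_one_sub ((p:ℝ):ℂ)
    have hsin2 : Complex.sin ((p:ℂ) * ((π:ℂ) - θ)) = ((Real.sin (π * (1 - α) * s / α) : ℝ) : ℂ) := by
      rw [Complex.ofReal_sin]
      congr 1
      rw [hθdef, hpdef]
      push_cast
      field_simp
    have hsin3 : Complex.sin ((π:ℂ) * ((p:ℝ):ℂ)) = ((Real.sin (s * π / α) : ℝ) : ℂ) := by
      rw [Complex.ofReal_sin]
      congr 1
      rw [hpdef]
      push_cast
      field_simp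
    have hlamp : lam ^ (((p:ℝ):ℂ) - 1) = lam ^ ((s / α - 1 : ℝ) : ℂ) := by
      congr 1
      rw [hpdef]
      push_cast
      ring
    have hfact : (Complex.I/2) *
        (Complex.Gamma ↑p * Complex.Gamma (1-(p:ℂ)) * Complex.exp ((p:ℂ) * ((θ:ℂ)-π) * Complex.I)
            * lam ^ ((p:ℂ)-1)
          - Complex.Gamma ↑p * Complex.Gamma (1-(p:ℂ)) * Complex.exp (-(p:ℂ) * ((θ:ℂ)-π) * Complex.I)
            * lam ^ ((p:ℂ)-1))
        = Complex.Gamma ↑p * Complex.Gamma (1-(p:ℂ)) * lam ^ ((p:ℂ)-1)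
          * Complex.sin ((p:ℂ) * ((π:ℂ) - θ)) := by
      rw [← hsin1]
      ring
    rw [hfact, hrefl, hsin2, hsin3, hlamp, abs_of_pos hα0, Complex.real_smul,
      Complex.ofReal_inv]
    ring
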